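/- Let (Y^h_n)_{n=0,…,N} be nonnegative random variables satisfying, for some constants b, C > 0 and all n < N, the recursion 0 ≤ Y^h_{n+1} ≤ (1+bh)Y^h_n + Ch + σ√(Y^h_n h)·W^h_{n+1}, where h = T/N and W^h_{n+1} is a bounded random variable with E[W^h_{n+1} | Y^h_0,…,Y^h_n] = 0 and |W^h_{n+1}| ≤ 2. Then for every p ≥ 1 there exists C_p > 0, depending only on p, b, C, σ, T and Y^h_0, such that sup_{0≤n≤N} E[(Y^h_n)^p] ≤ C_p uniformly in h ≤ T. -/

import Mathlib

set_option maxHeartbeats 1000000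

open MeasureTheory

lemma aux_choose_le (m k : ℕ) : (Nat.choose m k : ℝ) ≤ 2 ^ m := by
  have h : Nat.choose m k ≤ 2 ^ m := by
    rcases le_or_gt k m with hk | hk
    · calc Nat.choose m k ≤ ∑ i ∈ Finset.range (m + 1), Nat.choose m i :=
            Finset.single_le_sum (fun i _ => Nat.zero_le _) (Finset.mem_range.mpr (by omega))
      _ = 2 ^ m := Nat.sum_range_choose m
    · rw [Nat.choose_eq_zero_of_lt hk]; positivity
  exact_mod_cast (by exact_mod_cast h : (Nat.choose m k : ℝ) ≤ (2 ^ m : ℕ))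

lemma aux_pow_sub_pow_le (x y : ℝ) (hy : 0 ≤ y) (hxy : y ≤ x) :
    ∀ n : ℕ, x ^ (n + 1) - y ^ (n + 1) ≤ (n + 1 : ℝ) * x ^ n * (x - y) := by
  have hx : 0 ≤ x := hy.trans hxy
  intro n
  induction n with
  | zero => simp
  | succ n ih =>
    have hyx : y ^ (n + 1) ≤ x ^ (n + 1) := pow_le_pow_left₀ hy hxy _
    have h1 : x ^ (n + 1 + 1) - y ^ (n + 1 + 1) =
        x * (x ^ (n + 1) - y ^ (n + 1)) + (x - y) * y ^ (n + 1) := by ring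
    have h2 : x * (x ^ (n + 1) - y ^ (n + 1)) ≤ x * ((n + 1 : ℝ) * x ^ n * (x - y)) :=
      mul_le_mul_of_nonneg_left ih hx
    have h3 : (x - y) * y ^ (n + 1) ≤ (x - y) * x ^ (n + 1) :=
      mul_le_mul_of_nonneg_left hyx (by linarith)
    have h4 : x * ((n + 1 : ℝ) * x ^ n * (x - y)) + (x - y) * x ^ (n + 1)
        = ((n : ℝ) + 1 + 1) * x ^ (n + 1) * (x - y) := by ring
    push_cast
    linarith

lemma aux_one_add_pow (y : ℝ) (hy : 0 ≤ y) (M : ℕ) :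
    (1 + y) ^ M ≤ 2 ^ M * (1 + y ^ M) := by
  rcases le_total y 1 with h1 | h1
  · have h2 : (1 + y) ^ M ≤ 2 ^ M := pow_le_pow_left₀ (by linarith) (by linarith) M
    nlinarith [pow_nonneg hy M, pow_nonneg (by norm_num : (0:ℝ) ≤ 2) M]
  · have h2 : (1 + y) ^ M ≤ (2 * y) ^ M := pow_le_pow_left₀ (by linarith) (by linarith) M
    rw [mul_pow] at h2
    nlinarith [pow_nonneg (by norm_num : (0:ℝ) ≤ 2) M]

lemma aux_core (m : ℕ) (c₁ c₂ c₃ A S Wt Y h : ℝ)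
    (hc₁ : 1 ≤ c₁) (hc₂ : 1 ≤ c₂) (hc₃ : 0 ≤ c₃)
    (hY : 0 ≤ Y) (hh : 0 ≤ h) (hS0 : 0 ≤ S) (hW : |Wt| ≤ 2)
    (hA0 : 0 ≤ A) (hYA : Y ≤ A) (hA2 : A ≤ c₂ * (1 + Y))
    (hAY : A - Y ≤ h * c₃ * (1 + Y))
    (hS1 : S ≤ c₁ * (1 + Y)) (hS2 : S ^ 2 ≤ c₁ ^ 2 * h * (1 + Y) ^ 2) :
    (A + S * Wt) ^ (m + 1) ≤ Y ^ (m + 1) + ((m : ℝ) + 1) * A ^ m * S * Wt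
      + (((m : ℝ) + 1) * c₃ * c₂ ^ m
          + ((m : ℝ) + 1) * 2 ^ (m + 1) * (2 * c₁ * c₂) ^ (m + 1)) * h * (1 + Y) ^ (m + 1) := by
  have h1Y : (0 : ℝ) ≤ 1 + Y := by linarith
  have hD1 : 2 * c₁ ≤ 2 * c₁ * c₂ := by nlinarith
  have hD2 : c₂ ≤ 2 * c₁ * c₂ := by nlinarith
  have hD0 : (0 : ℝ) ≤ 2 * c₁ * c₂ := by nlinarith
  have hexp := add_pow A (S * Wt) (m + 1)
  rw [Finset.sum_range_succ, Finset.sum_range_succ] at hexp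
  have e2 : m + 1 - (m + 1) = 0 := by omega
  have e3 : m + 1 - m = 1 := by omega
  simp only [e2, e3, Nat.choose_succ_self_right, Nat.choose_self, pow_zero, pow_one, mul_one,
    Nat.cast_one, Nat.cast_add] at hexp
  have hterm : ∀ k ∈ Finset.range m,
      A ^ k * (S * Wt) ^ (m + 1 - k) * ((m + 1).choose k : ℝ)
        ≤ 2 ^ (m + 1) * (2 * c₁ * c₂) ^ (m + 1) * (h * (1 + Y) ^ (m + 1)) := by
    intro k hk
    have hk' : k < m := Finset.mem_range.mp hk
    obtain ⟨i, hi⟩ : ∃ i, m + 1 - k = i + 2 := ⟨m - 1 - k, by omega⟩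
    have hki : k + (i + 2) = m + 1 := by omega
    rw [hi]
    have hSW : (S * Wt) ^ (i + 2) ≤ (2 * S) ^ (i + 2) := by
      calc (S * Wt) ^ (i + 2) ≤ |(S * Wt) ^ (i + 2)| := le_abs_self _
        _ = (S * |Wt|) ^ (i + 2) := by rw [abs_pow, abs_mul, abs_of_nonneg hS0]
        _ ≤ (2 * S) ^ (i + 2) := by
            refine pow_le_pow_left₀ (by positivity) ?_ _
            nlinarith [abs_nonneg Wt]
    have h2S : (2 * S) ^ (i + 2) ≤ h * ((2 * c₁) ^ (i + 2) * (1 + Y) ^ (i + 2)) := by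
      have b1 : (2 * S) ^ i ≤ (2 * c₁ * (1 + Y)) ^ i :=
        pow_le_pow_left₀ (by positivity) (by nlinarith) i
      have b2 : (2 * S) ^ 2 ≤ 4 * (c₁ ^ 2 * h * (1 + Y) ^ 2) := by nlinarith
      calc (2 * S) ^ (i + 2) = (2 * S) ^ i * (2 * S) ^ 2 := by ring
        _ ≤ (2 * c₁ * (1 + Y)) ^ i * (4 * (c₁ ^ 2 * h * (1 + Y) ^ 2)) :=
            mul_le_mul b1 b2 (by positivity) (by positivity)
        _ = h * ((2 * c₁) ^ (i + 2) * (1 + Y) ^ (i + 2)) := by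
            rw [mul_pow]; ring
    have hbig : (S * Wt) ^ (i + 2) ≤ h * ((2 * c₁) ^ (i + 2) * (1 + Y) ^ (i + 2)) :=
      hSW.trans h2S
    have hAk : A ^ k ≤ c₂ ^ k * (1 + Y) ^ k := by
      rw [← mul_pow]; exact pow_le_pow_left₀ hA0 hA2 k
    calc A ^ k * (S * Wt) ^ (i + 2) * ((m + 1).choose k : ℝ)
        ≤ A ^ k * (h * ((2 * c₁) ^ (i + 2) * (1 + Y) ^ (i + 2))) * ((m + 1).choose k : ℝ) := by
          refine mul_le_mul_of_nonneg_right (mul_le_mul_of_nonneg_left hbig ?_) ?_ <;> positivity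
      _ ≤ (c₂ ^ k * (1 + Y) ^ k) * (h * ((2 * c₁) ^ (i + 2) * (1 + Y) ^ (i + 2))) * 2 ^ (m + 1) := by
          refine mul_le_mul (mul_le_mul_of_nonneg_right hAk (by positivity))
            (aux_choose_le _ _) (by positivity) (by positivity)
      _ = 2 ^ (m + 1) * (c₂ ^ k * (2 * c₁) ^ (i + 2)) * (h * (1 + Y) ^ (m + 1)) := by
          rw [show (1 + Y) ^ (m + 1) = (1 + Y) ^ k * (1 + Y) ^ (i + 2) by
            rw [← pow_add, hki]]
          ring
      _ ≤ 2 ^ (m + 1) * (2 * c₁ * c₂) ^ (m + 1) * (h * (1 + Y) ^ (m + 1)) := by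
          refine mul_le_mul_of_nonneg_right (mul_le_mul_of_nonneg_left ?_ (by positivity))
            (by positivity)
          calc c₂ ^ k * (2 * c₁) ^ (i + 2)
              ≤ (2 * c₁ * c₂) ^ k * (2 * c₁ * c₂) ^ (i + 2) :=
                mul_le_mul (pow_le_pow_left₀ (by linarith) hD2 k)
                  (pow_le_pow_left₀ (by positivity) hD1 _) (by positivity) (by positivity)
            _ = (2 * c₁ * c₂) ^ (m + 1) := by rw [← pow_add, hki]
  have hsum : ∑ k ∈ Finset.range m, A ^ k * (S * Wt) ^ (m + 1 - k) * ((m + 1).choose k : ℝ)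
      ≤ (m : ℝ) * (2 ^ (m + 1) * (2 * c₁ * c₂) ^ (m + 1) * (h * (1 + Y) ^ (m + 1))) := by
    calc _ ≤ ∑ _k ∈ Finset.range m,
          2 ^ (m + 1) * (2 * c₁ * c₂) ^ (m + 1) * (h * (1 + Y) ^ (m + 1)) :=
        Finset.sum_le_sum hterm
      _ = (m : ℝ) * (2 ^ (m + 1) * (2 * c₁ * c₂) ^ (m + 1) * (h * (1 + Y) ^ (m + 1))) := by
        rw [Finset.sum_const, Finset.card_range, nsmul_eq_mul]
  have hApow : A ^ (m + 1) ≤ Y ^ (m + 1)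
      + ((m : ℝ) + 1) * c₃ * c₂ ^ m * (h * (1 + Y) ^ (m + 1)) := by
    have h1 := aux_pow_sub_pow_le A Y hY hYA m
    have h2 : ((m : ℝ) + 1) * A ^ m * (A - Y)
        ≤ ((m : ℝ) + 1) * (c₂ ^ m * (1 + Y) ^ m) * (h * c₃ * (1 + Y)) := by
      have hAm : A ^ m ≤ c₂ ^ m * (1 + Y) ^ m := by
        rw [← mul_pow]; exact pow_le_pow_left₀ hA0 hA2 m
      refine mul_le_mul (mul_le_mul_of_nonneg_left hAm (by positivity)) hAY
        (by linarith) (by positivity)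
    have h3 : ((m : ℝ) + 1) * (c₂ ^ m * (1 + Y) ^ m) * (h * c₃ * (1 + Y))
        = ((m : ℝ) + 1) * c₃ * c₂ ^ m * (h * (1 + Y) ^ (m + 1)) := by ring
    linarith
  have hP : (0 : ℝ) ≤ 2 ^ (m + 1) * (2 * c₁ * c₂) ^ (m + 1) * (h * (1 + Y) ^ (m + 1)) := by
    positivity
  rw [hexp]
  nlinarith [hsum, hApow, hP]

lemma aux_key (b C σ T : ℝ) (hb : 0 < b) (hC : 0 < C) (hσ : 0 < σ) (hT : 0 < T) (m : ℕ) :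
    ∃ K : ℝ, 0 < K ∧ ∀ Y h W : ℝ, 0 ≤ Y → 0 ≤ h → h ≤ T → |W| ≤ 2 →
      ((1 + b * h) * Y + C * h + σ * Real.sqrt (Y * h) * W) ^ (m + 1)
        ≤ Y ^ (m + 1)
          + ((m : ℝ) + 1) * ((1 + b * h) * Y + C * h) ^ m * (σ * Real.sqrt (Y * h)) * W
          + K * h * (1 + Y) ^ (m + 1) := by
  refine ⟨((m : ℝ) + 1) * (b + C) * (1 + b * T + C * T) ^ m
      + ((m : ℝ) + 1) * 2 ^ (m + 1) * (2 * ((1 + σ) * (1 + T)) * (1 + b * T + C * T)) ^ (m + 1),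
    by positivity, ?_⟩
  intro Y h W hY hh hhT hW
  have hsq0 : 0 ≤ Real.sqrt (Y * h) := Real.sqrt_nonneg _
  have hsqrt : Real.sqrt (Y * h) ≤ (Y + h) / 2 := by
    have h1 : Y * h ≤ ((Y + h) / 2) ^ 2 := by nlinarith [sq_nonneg (Y - h)]
    have h2 := Real.sqrt_le_sqrt h1
    rwa [Real.sqrt_sq (by positivity)] at h2
  have hsqsq : Real.sqrt (Y * h) ^ 2 = Y * h := Real.sq_sqrt (by positivity)
  refine aux_core m ((1 + σ) * (1 + T)) (1 + b * T + C * T) (b + C)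
    ((1 + b * h) * Y + C * h) (σ * Real.sqrt (Y * h)) W Y h
    (by nlinarith) (by nlinarith) (by positivity) hY hh (by positivity) hW
    (by nlinarith) (by nlinarith [mul_nonneg (mul_nonneg hb.le hh) hY, mul_nonneg hC.le hh])
    ?_ ?_ ?_ ?_
  · nlinarith [mul_le_mul_of_nonneg_right (mul_le_mul_of_nonneg_left hhT hb.le) hY,
      mul_le_mul_of_nonneg_left hhT hC.le, mul_nonneg (mul_nonneg hb.le hT.le) hY,
      mul_nonneg hC.le hT.le]
  · nlinarith [mul_nonneg hb.le hh, mul_nonneg (mul_nonneg hC.le hh) hY]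
  · have h1 : σ * Real.sqrt (Y * h) ≤ σ * ((Y + h) / 2) :=
      mul_le_mul_of_nonneg_left hsqrt hσ.le
    nlinarith [mul_le_mul_of_nonneg_left hhT hσ.le, mul_nonneg hσ.le hY,
      mul_nonneg hT.le hY, mul_nonneg (mul_nonneg hσ.le hT.le) hY]
  · have h1 : (σ * Real.sqrt (Y * h)) ^ 2 = σ ^ 2 * (Y * h) := by
      rw [mul_pow, hsqsq]
    have h2 : Y * h ≤ h * (1 + Y) ^ 2 := by
      nlinarith [mul_nonneg hh hY, mul_nonneg hh (mul_nonneg hY hY)]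
    have h3 : σ ^ 2 * (Y * h) ≤ σ ^ 2 * (h * (1 + Y) ^ 2) :=
      mul_le_mul_of_nonneg_left h2 (by positivity)
    have hσle : σ ≤ (1 + σ) * (1 + T) := by nlinarith [mul_nonneg hσ.le hT.le]
    have h4 : σ ^ 2 ≤ ((1 + σ) * (1 + T)) ^ 2 := pow_le_pow_left₀ hσ.le hσle 2
    nlinarith [mul_nonneg hh (sq_nonneg (1 + Y)),
      mul_le_mul_of_nonneg_right h4 (mul_nonneg hh (sq_nonneg (1 + Y)))]

lemma aux_cross_zero {Ω : Type} [m0 : MeasurableSpace Ω] (μ : Measure Ω)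
    [IsProbabilityMeasure μ] (F : MeasurableSpace Ω) (hF : F ≤ m0)
    (G Wf : Ω → ℝ) (hG : StronglyMeasurable[F] G)
    (hGW : Integrable (fun ω => G ω * Wf ω) μ)
    (hWint : Integrable Wf μ) (hW0 : μ[Wf | F] =ᵐ[μ] 0) :
    ∫ ω, G ω * Wf ω ∂μ = 0 := by
  have h1 : μ[G * Wf | F] =ᵐ[μ] G * μ[Wf | F] :=
    condExp_mul_of_stronglyMeasurable_left hG hGW hWint
  have h2 : G * μ[Wf | F] =ᵐ[μ] 0 := by
    filter_upwards [hW0] with ω hω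
    simp [Pi.mul_apply, hω]
  have h3 : ∫ ω, G ω * Wf ω ∂μ = ∫ ω, (μ[G * Wf | F]) ω ∂μ :=
    (integral_condExp hF).symm
  rw [h3, integral_congr_ae (h1.trans h2)]
  simp

/-- Uniform moment bound for a nonnegative chain satisfying
0 ≤ Y_{n+1} ≤ (1+bh)Y_n + Ch + σ√(Y_n h) W_{n+1}, with h = T/N and W_{n+1}
bounded by 2 and conditionally centered given Y_0,…,Y_n: for every p ≥ 1 there
is C_p (depending only on p, b, C, σ, T and Y_0) with
sup_{n≤N} E[(Y_n)^p] ≤ C_p uniformly in h. -/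
theorem chain_uniform_moment_bound
    (b C σ T Y₀ : ℝ) (hb : 0 < b) (hC : 0 < C) (hσ : 0 < σ) (hT : 0 < T)
    (hY₀ : 0 ≤ Y₀) (p : ℝ) (hp : 1 ≤ p) :
    ∃ Cp : ℝ, 0 < Cp ∧
      ∀ (N : ℕ), 1 ≤ N →
      ∀ (Ω : Type) (_ : MeasurableSpace Ω) (μ : Measure Ω),
        IsProbabilityMeasure μ →
        ∀ (Y W : ℕ → Ω → ℝ),
          (∀ n, Measurable (Y n)) →
          (∀ n, Measurable (W n)) →
          (∀ ω, Y 0 ω = Y₀) →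
          (∀ n ω, 0 ≤ Y n ω) →
          (∀ n ω, |W (n + 1) ω| ≤ 2) →
          (∀ n < N,
            μ[W (n + 1) |
                MeasurableSpace.comap (fun ω => (fun i : Fin (n + 1) => Y i ω))
                  MeasurableSpace.pi] =ᵐ[μ] 0) →
          (∀ n < N, ∀ᵐ ω ∂μ,
            Y (n + 1) ω ≤
              (1 + b * (T / N)) * Y n ω + C * (T / N) +
                σ * Real.sqrt (Y n ω * (T / N)) * W (n + 1) ω) →
          ∀ n ≤ N, (∫⁻ ω, ENNReal.ofReal (Y n ω ^ p) ∂μ) ≤ ENNReal.ofReal Cp := by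
  classical
  obtain ⟨m₀, hm₀⟩ : ∃ m₀, ⌈p⌉₊ = m₀ + 1 :=
    ⟨⌈p⌉₊ - 1, by have := Nat.one_le_ceil_iff.mpr (show (0:ℝ) < p by linarith); omega⟩
  obtain ⟨K, hK, hkey⟩ := aux_key b C σ T hb hC hσ hT m₀
  set K' : ℝ := K * 2 ^ (m₀ + 1) with hK'def
  have hK'pos : 0 < K' := by positivity
  have hCp : 0 < 1 + Real.exp (K' * T) * (Y₀ ^ (m₀ + 1) + 1) := by
    have h1 : (0:ℝ) < Y₀ ^ (m₀ + 1) + 1 := by nlinarith [pow_nonneg hY₀ (m₀ + 1)]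
    nlinarith [mul_pos (Real.exp_pos (K' * T)) h1]
  refine ⟨1 + Real.exp (K' * T) * (Y₀ ^ (m₀ + 1) + 1), hCp, ?_⟩
  intro N hN Ω mΩ μ hμ Y W hYm hWm hY0 hYnn hWb hWcond hrec
  haveI := hμ
  set h : ℝ := T / N with hhdef
  have hNpos : (0:ℝ) < N := by exact_mod_cast Nat.lt_of_lt_of_le Nat.zero_lt_one hN
  have hh0 : 0 < h := by positivity
  have hhT : h ≤ T := by
    rw [hhdef]; exact div_le_self hT.le (by exact_mod_cast hN)
  have hhN : h * N = T := by rw [hhdef]; field_simp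
  -- deterministic recursive bound
  set B : ℕ → ℝ := fun k =>
    Nat.rec Y₀ (fun _ x => (1 + b * h) * x + C * h + σ * Real.sqrt (x * h) * 2) k with hBdef
  have hBsucc : ∀ k, B (k + 1) = (1 + b * h) * B k + C * h + σ * Real.sqrt (B k * h) * 2 := by
    intro k; rfl
  have hB0 : ∀ k, 0 ≤ B k := by
    intro k; induction k with
    | zero => exact hY₀
    | succ k ih =>
      rw [hBsucc]
      have hs : 0 ≤ Real.sqrt (B k * h) := Real.sqrt_nonneg _
      nlinarith [mul_nonneg (mul_nonneg hb.le hh0.le) ih, mul_nonneg hC.le hh0.le,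
        mul_nonneg hσ.le hs]
  have hYB : ∀ k, k ≤ N → ∀ᵐ ω ∂μ, Y k ω ≤ B k := by
    intro k
    induction k with
    | zero =>
      intro _
      filter_upwards with ω
      exact le_of_eq (hY0 ω)
    | succ k ih =>
      intro hk
      have hk' : k < N := by omega
      filter_upwards [hrec k hk', ih (by omega)] with ω h1 h2
      have hYk := hYnn k ω
      have hs : Real.sqrt (Y k ω * h) ≤ Real.sqrt (B k * h) :=
        Real.sqrt_le_sqrt (mul_le_mul_of_nonneg_right h2 hh0.le)
      have hs0 : 0 ≤ Real.sqrt (Y k ω * h) := Real.sqrt_nonneg _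
      have hw : W (k + 1) ω ≤ 2 := le_of_abs_le (hWb k ω)
      rw [hBsucc]
      have hstep : σ * Real.sqrt (Y k ω * h) * W (k + 1) ω
          ≤ σ * Real.sqrt (B k * h) * 2 := by
        calc σ * Real.sqrt (Y k ω * h) * W (k + 1) ω
            ≤ σ * Real.sqrt (Y k ω * h) * 2 :=
              mul_le_mul_of_nonneg_left hw (mul_nonneg hσ.le hs0)
          _ ≤ σ * Real.sqrt (B k * h) * 2 := by
              have := mul_le_mul_of_nonneg_left hs hσ.le
              linarith
      have hlin : (1 + b * h) * Y k ω ≤ (1 + b * h) * B k :=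
        mul_le_mul_of_nonneg_left h2 (by nlinarith [mul_nonneg hb.le hh0.le])
      calc Y (k + 1) ω ≤ (1 + b * h) * Y k ω + C * h
            + σ * Real.sqrt (Y k ω * h) * W (k + 1) ω := h1
        _ ≤ (1 + b * h) * B k + C * h + σ * Real.sqrt (B k * h) * 2 := by linarith
  -- integrability from a.e. boundedness
  have hIntOf : ∀ (f : Ω → ℝ) (c : ℝ), Measurable f → (∀ᵐ ω ∂μ, |f ω| ≤ c) →
      Integrable f μ := by
    intro f c hf hc
    refine (integrable_const c).mono' hf.aestronglyMeasurable ?_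
    simpa [Real.norm_eq_abs] using hc
  have iYpow : ∀ k, k ≤ N → Integrable (fun ω => Y k ω ^ (m₀ + 1)) μ := by
    intro k hk
    refine hIntOf _ ((B k) ^ (m₀ + 1)) ((hYm k).pow_const _) ?_
    filter_upwards [hYB k hk] with ω hω
    rw [abs_of_nonneg (pow_nonneg (hYnn k ω) _)]
    exact pow_le_pow_left₀ (hYnn k ω) hω _
  have iOneAdd : ∀ k, k ≤ N → Integrable (fun ω => (1 + Y k ω) ^ (m₀ + 1)) μ := by
    intro k hk
    refine hIntOf _ ((1 + B k) ^ (m₀ + 1)) (((hYm k).const_add 1).pow_const _) ?_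
    filter_upwards [hYB k hk] with ω hω
    rw [abs_of_nonneg (pow_nonneg (by linarith [hYnn k ω]) _)]
    exact pow_le_pow_left₀ (by linarith [hYnn k ω]) (by linarith) _
  -- the moment sequence
  set x : ℕ → ℝ := fun k => ∫ ω, Y k ω ^ (m₀ + 1) ∂μ with hxdef
  have hxnn : ∀ k, 0 ≤ x k := by
    intro k
    exact integral_nonneg fun ω => pow_nonneg (hYnn k ω) _
  have hx0 : x 0 = Y₀ ^ (m₀ + 1) := by
    have e1 : x 0 = ∫ _ω, Y₀ ^ (m₀ + 1) ∂μ :=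
      integral_congr_ae (Filter.Eventually.of_forall fun ω => by simp [hY0 ω])
    rw [e1, integral_const]
    simp
  -- the one-step recursion on moments
  have hstep : ∀ n, n < N → x (n + 1) + 1 ≤ (1 + K' * h) * (x n + 1) := by
    intro n hn
    set A : Ω → ℝ := fun ω => (1 + b * h) * Y n ω + C * h with hAdef
    set S : Ω → ℝ := fun ω => σ * Real.sqrt (Y n ω * h) with hSdef
    have hAmeas : Measurable A := ((hYm n).const_mul _).add_const _
    have hSmeas : Measurable S :=
      (Real.continuous_sqrt.measurable.comp ((hYm n).mul_const h)).const_mul σ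
    have hA0 : ∀ ω, 0 ≤ A ω := by
      intro ω
      have := hYnn n ω
      have : 0 ≤ (1 + b * h) * Y n ω :=
        mul_nonneg (by nlinarith [mul_nonneg hb.le hh0.le]) this
      simp only [hAdef]
      nlinarith [mul_nonneg hC.le hh0.le]
    have hS0 : ∀ ω, 0 ≤ S ω := fun ω =>
      mul_nonneg hσ.le (Real.sqrt_nonneg _)
    have hAb0 : 0 ≤ (1 + b * h) * B n + C * h := by
      nlinarith [hB0 n, mul_nonneg hb.le hh0.le, mul_nonneg hC.le hh0.le,
        mul_nonneg (mul_nonneg hb.le hh0.le) (hB0 n)]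
    have hSb0 : 0 ≤ σ * Real.sqrt (B n * h) :=
      mul_nonneg hσ.le (Real.sqrt_nonneg _)
    -- a.e. bounds on A and S
    have hABd : ∀ᵐ ω ∂μ, A ω ≤ (1 + b * h) * B n + C * h := by
      filter_upwards [hYB n (le_of_lt hn)] with ω hω
      simp only [hAdef]
      have : (1 + b * h) * Y n ω ≤ (1 + b * h) * B n :=
        mul_le_mul_of_nonneg_left hω (by nlinarith [mul_nonneg hb.le hh0.le])
      linarith
    have hSBd : ∀ᵐ ω ∂μ, S ω ≤ σ * Real.sqrt (B n * h) := by
      filter_upwards [hYB n (le_of_lt hn)] with ω hω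
      simp only [hSdef]
      exact mul_le_mul_of_nonneg_left
        (Real.sqrt_le_sqrt (mul_le_mul_of_nonneg_right hω hh0.le)) hσ.le
    -- integrability of the various pieces
    have iW : Integrable (W (n + 1)) μ :=
      hIntOf _ 2 (hWm (n + 1)) (Filter.Eventually.of_forall (hWb n))
    set G : Ω → ℝ := fun ω => ((m₀ : ℝ) + 1) * A ω ^ m₀ * S ω with hGdef
    have hGmeas : Measurable G := ((hAmeas.pow_const m₀).const_mul _).mul hSmeas
    have hGBd : ∀ᵐ ω ∂μ, |G ω| ≤ ((m₀ : ℝ) + 1) * ((1 + b * h) * B n + C * h) ^ m₀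
        * (σ * Real.sqrt (B n * h)) := by
      filter_upwards [hABd, hSBd] with ω h1 h2
      have hGnn : 0 ≤ G ω :=
        mul_nonneg (mul_nonneg (by positivity) (pow_nonneg (hA0 ω) _)) (hS0 ω)
      rw [abs_of_nonneg hGnn]
      simp only [hGdef]
      refine mul_le_mul (mul_le_mul_of_nonneg_left
        (pow_le_pow_left₀ (hA0 ω) h1 m₀) (by positivity)) h2 (hS0 ω)
        (mul_nonneg (by positivity) (pow_nonneg hAb0 _))
    have iGW : Integrable (fun ω => G ω * W (n + 1) ω) μ := by
      refine hIntOf _ (((m₀ : ℝ) + 1) * ((1 + b * h) * B n + C * h) ^ m₀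
        * (σ * Real.sqrt (B n * h)) * 2) (hGmeas.mul (hWm (n + 1))) ?_
      filter_upwards [hGBd] with ω h1
      rw [abs_mul]
      have hGnn : 0 ≤ |G ω| := abs_nonneg _
      calc |G ω| * |W (n + 1) ω| ≤ |G ω| * 2 :=
            mul_le_mul_of_nonneg_left (hWb n ω) hGnn
        _ ≤ _ := mul_le_mul_of_nonneg_right h1 (by norm_num)
    have iZ : Integrable (fun ω => (A ω + S ω * W (n + 1) ω) ^ (m₀ + 1)) μ := by
      refine hIntOf _ (((1 + b * h) * B n + C * h + σ * Real.sqrt (B n * h) * 2) ^ (m₀ + 1))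
        ((hAmeas.add (hSmeas.mul (hWm (n + 1)))).pow_const _) ?_
      filter_upwards [hABd, hSBd] with ω h1 h2
      rw [abs_pow]
      refine pow_le_pow_left₀ (abs_nonneg _) ?_ _
      have h3 : |S ω * W (n + 1) ω| ≤ S ω * 2 := by
        rw [abs_mul, abs_of_nonneg (hS0 ω)]
        exact mul_le_mul_of_nonneg_left (hWb n ω) (hS0 ω)
      have h4 : |A ω + S ω * W (n + 1) ω| ≤ A ω + S ω * 2 := by
        calc |A ω + S ω * W (n + 1) ω| ≤ |A ω| + |S ω * W (n + 1) ω| := abs_add_le _ _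
          _ ≤ A ω + S ω * 2 := by
              rw [abs_of_nonneg (hA0 ω)]; linarith
      have h5 : S ω * 2 ≤ σ * Real.sqrt (B n * h) * 2 := by linarith
      linarith
    -- the cross term vanishes
    have hcross : ∫ ω, G ω * W (n + 1) ω ∂μ = 0 := by
      have hmap : Measurable (fun ω => (fun i : Fin (n + 1) => Y i ω)) :=
        measurable_pi_lambda _ fun i => hYm i
      have hYnF : Measurable[MeasurableSpace.comap
          (fun ω => (fun i : Fin (n + 1) => Y i ω)) MeasurableSpace.pi] (Y n) := by
        have h1 : Measurable[MeasurableSpace.comap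
            (fun ω => (fun i : Fin (n + 1) => Y i ω)) MeasurableSpace.pi]
            (fun ω => (fun i : Fin (n + 1) => Y i ω)) := Measurable.of_comap_le le_rfl
        exact (measurable_pi_apply (⟨n, by omega⟩ : Fin (n + 1))).comp h1
      have hφ : Measurable (fun t : ℝ =>
          ((m₀ : ℝ) + 1) * ((1 + b * h) * t + C * h) ^ m₀ * (σ * Real.sqrt (t * h))) :=
        ((((measurable_id.const_mul _).add_const _).pow_const _).const_mul _).mul
          ((Real.continuous_sqrt.measurable.comp (measurable_id.mul_const _)).const_mul _)
      exact aux_cross_zero μ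
        (MeasurableSpace.comap (fun ω => (fun i : Fin (n + 1) => Y i ω)) MeasurableSpace.pi)
        hmap.comap_le G (W (n + 1)) ((hφ.comp hYnF).stronglyMeasurable) iGW iW (hWcond n hn)
    -- a.e. pointwise inequality
    have hae : ∀ᵐ ω ∂μ, Y (n + 1) ω ^ (m₀ + 1)
        ≤ Y n ω ^ (m₀ + 1) + (G ω * W (n + 1) ω + K * h * (1 + Y n ω) ^ (m₀ + 1)) := by
      filter_upwards [hrec n hn] with ω h1
      have h2 : Y (n + 1) ω ^ (m₀ + 1) ≤ (A ω + S ω * W (n + 1) ω) ^ (m₀ + 1) :=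
        pow_le_pow_left₀ (hYnn _ _) h1 _
      have h3 := hkey (Y n ω) h (W (n + 1) ω) (hYnn n ω) hh0.le hhT (hWb n ω)
      simp only [hAdef, hSdef, hGdef]
      nlinarith [h2, h3]
    have iKY : Integrable (fun ω => K * h * (1 + Y n ω) ^ (m₀ + 1)) μ :=
      (iOneAdd n hn.le).const_mul (K * h)
    have iG2 : Integrable (fun ω => G ω * W (n + 1) ω
        + K * h * (1 + Y n ω) ^ (m₀ + 1)) μ := iGW.add iKY
    have iRHS : Integrable (fun ω => Y n ω ^ (m₀ + 1)
        + (G ω * W (n + 1) ω + K * h * (1 + Y n ω) ^ (m₀ + 1))) μ :=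
      (iYpow n hn.le).add iG2
    have hx1 : x (n + 1) ≤ x n + (0 + K * h * ∫ ω, (1 + Y n ω) ^ (m₀ + 1) ∂μ) := by
      have e1 : x (n + 1) ≤ ∫ ω, (Y n ω ^ (m₀ + 1)
          + (G ω * W (n + 1) ω + K * h * (1 + Y n ω) ^ (m₀ + 1))) ∂μ := by
        have hmono : (fun ω => Y (n + 1) ω ^ (m₀ + 1)) ≤ᵐ[μ] _ := hae
        exact integral_mono_ae (iYpow (n + 1) hn) iRHS hmono
      have eq1 : ∫ ω, (Y n ω ^ (m₀ + 1)
            + (G ω * W (n + 1) ω + K * h * (1 + Y n ω) ^ (m₀ + 1))) ∂μ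
          = (∫ ω, Y n ω ^ (m₀ + 1) ∂μ)
            + ∫ ω, (G ω * W (n + 1) ω + K * h * (1 + Y n ω) ^ (m₀ + 1)) ∂μ :=
        integral_add (iYpow n hn.le) iG2
      have eq2 : ∫ ω, (G ω * W (n + 1) ω + K * h * (1 + Y n ω) ^ (m₀ + 1)) ∂μ
          = (∫ ω, G ω * W (n + 1) ω ∂μ) + ∫ ω, K * h * (1 + Y n ω) ^ (m₀ + 1) ∂μ :=
        integral_add iGW iKY
      have eq3 : ∫ ω, K * h * (1 + Y n ω) ^ (m₀ + 1) ∂μ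
          = K * h * ∫ ω, (1 + Y n ω) ^ (m₀ + 1) ∂μ := integral_const_mul _ _
      rw [eq1, eq2, eq3, hcross] at e1
      exact e1
    have h2M : ∫ ω, (1 + Y n ω) ^ (m₀ + 1) ∂μ ≤ 2 ^ (m₀ + 1) * (1 + x n) := by
      have e1 : ∫ ω, (1 + Y n ω) ^ (m₀ + 1) ∂μ
          ≤ ∫ ω, 2 ^ (m₀ + 1) * (1 + Y n ω ^ (m₀ + 1)) ∂μ := by
        refine integral_mono (iOneAdd n hn.le)
          (((integrable_const 1).add (iYpow n hn.le)).const_mul _) ?_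
        intro ω
        exact aux_one_add_pow (Y n ω) (hYnn n ω) (m₀ + 1)
      rw [integral_const_mul, integral_add (integrable_const 1) (iYpow n hn.le),
        integral_const] at e1
      simpa using e1
    have h3 : K * h * ∫ ω, (1 + Y n ω) ^ (m₀ + 1) ∂μ ≤ K * h * (2 ^ (m₀ + 1) * (1 + x n)) :=
      mul_le_mul_of_nonneg_left h2M (mul_nonneg hK.le hh0.le)
    have h4 : K * h * (2 ^ (m₀ + 1) * (1 + x n)) = K' * h * (1 + x n) := by
      rw [hK'def]; ring
    nlinarith [hx1, h3, hxnn n, mul_pos hK'pos hh0]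
  -- solve the recursion
  have hxb : ∀ k, k ≤ N → x k + 1 ≤ (1 + K' * h) ^ k * (Y₀ ^ (m₀ + 1) + 1) := by
    intro k
    induction k with
    | zero => intro _; rw [hx0]; simp
    | succ k ih =>
      intro hk
      have hk' : k < N := by omega
      have h1 := hstep k hk'
      have h2 := ih (by omega)
      calc x (k + 1) + 1 ≤ (1 + K' * h) * (x k + 1) := h1
        _ ≤ (1 + K' * h) * ((1 + K' * h) ^ k * (Y₀ ^ (m₀ + 1) + 1)) :=
            mul_le_mul_of_nonneg_left h2 (by nlinarith [mul_pos hK'pos hh0])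
        _ = (1 + K' * h) ^ (k + 1) * (Y₀ ^ (m₀ + 1) + 1) := by rw [pow_succ]; ring
  have hxfin : ∀ k, k ≤ N → x k ≤ Real.exp (K' * T) * (Y₀ ^ (m₀ + 1) + 1) := by
    intro k hk
    have h1 := hxb k hk
    have h2 : (1 + K' * h) ^ k ≤ Real.exp (K' * T) := by
      have e1 : (1 + K' * h) ≤ Real.exp (K' * h) := by
        have := Real.add_one_le_exp (K' * h)
        linarith
      have e2 : (1 + K' * h) ^ k ≤ Real.exp (K' * h) ^ k :=
        pow_le_pow_left₀ (by nlinarith [mul_pos hK'pos hh0]) e1 k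
      have e3 : Real.exp (K' * h) ^ k = Real.exp ((k : ℝ) * (K' * h)) :=
        (Real.exp_nat_mul _ k).symm
      have e4 : (k : ℝ) * (K' * h) ≤ K' * T := by
        have hkN : (k : ℝ) ≤ (N : ℝ) := by exact_mod_cast hk
        have : (k : ℝ) * (K' * h) ≤ (N : ℝ) * (K' * h) :=
          mul_le_mul_of_nonneg_right hkN (by nlinarith [mul_pos hK'pos hh0])
        calc (k : ℝ) * (K' * h) ≤ (N : ℝ) * (K' * h) := this
          _ = K' * (h * N) := by ring
          _ = K' * T := by rw [hhN]
      calc (1 + K' * h) ^ k ≤ Real.exp (K' * h) ^ k := e2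
        _ = Real.exp ((k : ℝ) * (K' * h)) := e3
        _ ≤ Real.exp (K' * T) := Real.exp_le_exp.mpr e4
    have h3 : (1 + K' * h) ^ k * (Y₀ ^ (m₀ + 1) + 1)
        ≤ Real.exp (K' * T) * (Y₀ ^ (m₀ + 1) + 1) :=
      mul_le_mul_of_nonneg_right h2 (by nlinarith [pow_nonneg hY₀ (m₀ + 1)])
    linarith
  -- conclude, going from rpow p to the (m₀+1)-th moment
  intro n hn
  have hptw : ∀ ω, Y n ω ^ p ≤ 1 + Y n ω ^ (m₀ + 1) := by
    intro ω
    have hY := hYnn n ω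
    rcases le_total (Y n ω) 1 with h1 | h1
    · have h2 : Y n ω ^ p ≤ 1 := Real.rpow_le_one hY h1 (by linarith)
      nlinarith [pow_nonneg hY (m₀ + 1)]
    · have h2 : Y n ω ^ p ≤ Y n ω ^ ((m₀ + 1 : ℕ) : ℝ) := by
        refine Real.rpow_le_rpow_of_exponent_le h1 ?_
        have := Nat.le_ceil p
        rw [hm₀] at this
        exact_mod_cast this
      rw [Real.rpow_natCast] at h2
      linarith
  have hWint : Integrable (fun ω => 1 + Y n ω ^ (m₀ + 1)) μ :=
    (integrable_const 1).add (iYpow n hn)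
  calc ∫⁻ ω, ENNReal.ofReal (Y n ω ^ p) ∂μ
      ≤ ∫⁻ ω, ENNReal.ofReal (1 + Y n ω ^ (m₀ + 1)) ∂μ :=
        lintegral_mono fun ω => ENNReal.ofReal_le_ofReal (hptw ω)
    _ = ENNReal.ofReal (∫ ω, (1 + Y n ω ^ (m₀ + 1)) ∂μ) :=
        (ofReal_integral_eq_lintegral_ofReal hWint
          (Filter.Eventually.of_forall fun ω => by
            simp only [Pi.zero_apply]
            nlinarith [pow_nonneg (hYnn n ω) (m₀ + 1)])).symm
    _ ≤ ENNReal.ofReal (1 + Real.exp (K' * T) * (Y₀ ^ (m₀ + 1) + 1)) := by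
        refine ENNReal.ofReal_le_ofReal ?_
        rw [integral_add (integrable_const 1) (iYpow n hn), integral_const]
        have := hxfin n hn
        simp only [probReal_univ, smul_eq_mul, one_mul]
        have hxn : (∫ ω, Y n ω ^ (m₀ + 1) ∂μ) = x n := rfl
        rw [hxn]
        linarith
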